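/- Let F be a linear fractional transformation represented by an integer matrix of determinant a power of 2 that maps [0,1) bijectively to [0,1). If additionally F is represented by a product of the matrices A = [[1,0],[1,1]], B = [[0,1],[-1,2]], C₂ = [[2,0],[1,1]] and their inverses, and F is not the identity, then F has no fixed points in the open interval (0,1). -/

import Mathlib

def MA : Matrix (Fin 2) (Fin 2) ℤ := !![1, 0; 1, 1]
def MB : Matrix (Fin 2) (Fin 2) ℤ := !![0, 1; -1, 2]
def MC : Matrix (Fin 2) (Fin 2) ℤ := !![2, 0; 1, 1]
/- The inverses of A, B, C₂ (the last up to positive scalar). -/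
def Ma : Matrix (Fin 2) (Fin 2) ℤ := !![1, 0; -1, 1]
def Mb : Matrix (Fin 2) (Fin 2) ℤ := !![2, -1; 1, 0]
def Mc : Matrix (Fin 2) (Fin 2) ℤ := !![1, 0; -1, 2]

noncomputable def lft (M : Matrix (Fin 2) (Fin 2) ℤ) (x : ℝ) : ℝ :=
  ((M 0 0 : ℝ) * x + (M 0 1 : ℝ)) / ((M 1 0 : ℝ) * x + (M 1 1 : ℝ))

open Filter Set in
set_option maxHeartbeats 1000000 in
/-- If F is a linear fractional transformation represented by an integer matrix of
    determinant a power of 2 mapping [0,1) bijectively to [0,1), represented by a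
    product of the matrices A, B, C₂ and their inverses, and F is not the identity on
    [0,1), then F has no fixed points in (0,1). -/
theorem stmt16 (F : ℝ → ℝ)
    (hmat : ∃ N : Matrix (Fin 2) (Fin 2) ℤ, ∃ n : ℕ,
      N.det = 2 ^ n ∧ ∀ x ∈ Set.Ico (0 : ℝ) 1, F x = lft N x)
    (hgen : ∃ M ∈ Submonoid.closure
        ({MA, MB, MC, Ma, Mb, Mc} : Set (Matrix (Fin 2) (Fin 2) ℤ)),
      ∀ x ∈ Set.Ico (0 : ℝ) 1, F x = lft M x)
    (hbij : Set.BijOn F (Set.Ico 0 1) (Set.Ico 0 1))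
    (hne : ¬ ∀ x ∈ Set.Ico (0 : ℝ) 1, F x = x) :
    ∀ x ∈ Set.Ioo (0 : ℝ) 1, F x ≠ x := by
  intro x₀ hx₀ hfix
  obtain ⟨N, n, hdet, hF⟩ := hmat
  set a : ℝ := ((N 0 0 : ℤ) : ℝ) with ha
  set b : ℝ := ((N 0 1 : ℤ) : ℝ) with hb
  set c : ℝ := ((N 1 0 : ℤ) : ℝ) with hc
  set d : ℝ := ((N 1 1 : ℤ) : ℝ) with hd
  have hdetR : a * d - b * c = 2 ^ n := by
    rw [Matrix.det_fin_two] at hdet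
    have h := congrArg (Int.cast : ℤ → ℝ) hdet
    push_cast at h
    rw [ha, hb, hc, hd]
    linarith
  have hdpos : (0:ℝ) < a * d - b * c := by rw [hdetR]; positivity
  have hFeq : ∀ x ∈ Set.Ico (0:ℝ) 1, F x = (a*x + b)/(c*x + d) := by
    intro x hx
    rw [hF x hx]; rfl
  -- Step A: denominator never vanishes on [0,1)
  have hD : ∀ x ∈ Set.Ico (0:ℝ) 1, c*x + d ≠ 0 := by
    intro x₁ hx₁ h0
    have hcne : c ≠ 0 := by
      intro hc0
      rw [hc0] at h0
      have hd0 : d = 0 := by linarith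
      rw [hc0, hd0] at hdpos; linarith
    have hnum : a*x₁ + b ≠ 0 := by
      intro hnum
      have h1 : a*d - b*c = -c*(a*x₁+b) := by linear_combination a * h0
      rw [hnum] at h1; rw [h1] at hdpos; linarith
    set M : ℝ := |a*x₁ + b| with hM
    have hMpos : 0 < M := abs_pos.mpr hnum
    set K : ℝ := |a| + |c| with hK
    have hKpos : 0 < K := by
      have := abs_nonneg a
      have h2 : 0 < |c| := abs_pos.mpr hcne
      rw [hK]; linarith
    set δ : ℝ := min ((1 - x₁)/2) (M/(K+1)) with hδ
    have hδpos : 0 < δ := by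
      apply lt_min
      · linarith [hx₁.2]
      · positivity
    have hδ1 : δ ≤ (1 - x₁)/2 := min_le_left _ _
    have hδ2 : δ ≤ M/(K+1) := min_le_right _ _
    set x : ℝ := x₁ + δ with hx
    have hxmem : x ∈ Set.Ico (0:ℝ) 1 := by
      constructor
      · have := hx₁.1; rw [hx]; linarith
      · rw [hx]; linarith [hx₁.2]
    have hFx := hbij.mapsTo hxmem
    have hden : c*x + d = c*δ := by rw [hx]; linarith [h0]; 
    have hFxeq : F x = (a*x+b)/(c*δ) := by rw [hFeq x hxmem, hden]
    have hcd : c*δ ≠ 0 := mul_ne_zero hcne (ne_of_gt hδpos)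
    have heq : a*x+b = F x * (c*δ) := by
      rw [hFxeq]; field_simp
    have habs1 : |a*x+b| ≤ |c| * δ := by
      rw [heq, abs_mul, abs_mul, abs_of_pos hδpos]
      have hF1 : |F x| ≤ 1 := by
        rw [abs_of_nonneg hFx.1]; linarith [hFx.2]
      calc |F x| * (|c| * δ) ≤ 1 * (|c| * δ) :=
            mul_le_mul_of_nonneg_right hF1 (by positivity)
        _ = |c| * δ := one_mul _
    have habs2 : M ≤ |a*x+b| + |a| * δ := by
      have he2 : a*x₁ + b = (a*x+b) - a*δ := by rw [hx]; ring
      rw [hM, he2]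
      calc |(a*x+b) - a*δ| ≤ |a*x+b| + |a*δ| := abs_sub _ _
        _ = |a*x+b| + |a| * δ := by rw [abs_mul, abs_of_pos hδpos]
    have hcontr : M ≤ K * δ := by rw [hK]; nlinarith
    have hδK : δ * (K+1) ≤ M := (le_div_iff₀ (by linarith)).mp hδ2
    nlinarith
  -- Step B: product of denominators is positive
  have hB : ∀ x ∈ Set.Ico (0:ℝ) 1, ∀ y ∈ Set.Ico (0:ℝ) 1, 0 < (c*x+d)*(c*y+d) := by
    intro x hx y hy
    rcases lt_trichotomy ((c*x+d)*(c*y+d)) 0 with hlt | heq | hgt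
    · exfalso
      have hcne : c ≠ 0 := by
        intro hc0; rw [hc0] at hlt; simp at hlt; nlinarith
      set r : ℝ := -d/c with hr
      have hroot : c*r + d = 0 := by rw [hr]; field_simp; ring
      have hprod : (x - r)*(y - r) < 0 := by
        have hq : (x - r)*(y - r) = (c*x+d)*(c*y+d)/c^2 := by
          rw [hr]; field_simp; ring
        rw [hq]
        exact div_neg_of_neg_of_pos hlt (by positivity)
      have hrmem : r ∈ Set.Ico (0:ℝ) 1 := by
        constructor
        · nlinarith [hx.1, hy.1]
        · nlinarith [hx.2, hy.2]
      exact hD r hrmem hroot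
    · exact absurd heq (mul_ne_zero (hD x hx) (hD y hy))
    · exact hgt
  -- Step C: F is strictly increasing on [0,1)
  have hmono : ∀ x ∈ Set.Ico (0:ℝ) 1, ∀ y ∈ Set.Ico (0:ℝ) 1, x < y → F x < F y := by
    intro x hx y hy hxy
    rw [hFeq x hx, hFeq y hy]
    have key : (a*y+b)/(c*y+d) - (a*x+b)/(c*x+d)
        = ((a*d - b*c)*(y-x))/((c*x+d)*(c*y+d)) := by
      have h1 := hD x hx
      have h2 := hD y hy
      rw [div_sub_div _ _ h2 h1, div_eq_div_iff (mul_ne_zero h2 h1) (mul_ne_zero h1 h2)]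
      ring
    have hpos : 0 < ((a*d - b*c)*(y-x))/((c*x+d)*(c*y+d)) :=
      div_pos (mul_pos hdpos (by linarith)) (hB x hx y hy)
    linarith [key ▸ hpos]
  -- Step D: F 0 = 0, hence b = 0
  have h0mem : (0:ℝ) ∈ Set.Ico (0:ℝ) 1 := ⟨le_refl 0, one_pos⟩
  have hF0 : F 0 = 0 := by
    have hmem := hbij.mapsTo h0mem
    by_contra h
    have hpos : 0 < F 0 := lt_of_le_of_ne hmem.1 (Ne.symm h)
    have hy : F 0 / 2 ∈ Set.Ico (0:ℝ) 1 := ⟨by positivity, by linarith [hmem.2]⟩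
    obtain ⟨x', hx', hFx'⟩ := hbij.surjOn hy
    have hle : F 0 ≤ F x' := by
      rcases eq_or_lt_of_le hx'.1 with h'|h'
      · rw [← h']
      · exact le_of_lt (hmono 0 h0mem x' hx' h')
    rw [hFx'] at hle; linarith
  have hdne : d ≠ 0 := by
    have := hD 0 h0mem; rwa [mul_zero, zero_add] at this
  have hb0 : b = 0 := by
    have h := hFeq 0 h0mem
    rw [hF0, mul_zero, zero_add, mul_zero, zero_add] at h
    rcases div_eq_zero_iff.mp h.symm with h'|h'
    · exact h'
    · exact absurd h' hdne
  -- the fixed point equation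
  have hx₀mem : x₀ ∈ Set.Ico (0:ℝ) 1 := ⟨le_of_lt hx₀.1, hx₀.2⟩
  have hdx₀ : c*x₀ + d ≠ 0 := hD x₀ hx₀mem
  have hfixeq : a = c*x₀ + d := by
    have h := hFeq x₀ hx₀mem
    rw [hfix, hb0, add_zero] at h
    have h2 : a*x₀ = x₀*(c*x₀+d) := by
      rw [eq_div_iff hdx₀] at h
      linarith [h]
    have h3 : (a - (c*x₀+d))*x₀ = 0 := by linarith [h2]
    rcases mul_eq_zero.mp h3 with h'|h'
    · linarith
    · exact absurd h' (ne_of_gt hx₀.1)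
  -- Step F
  by_cases hcd : c + d = 0
  · -- then the map is unbounded near 1: contradiction
    have hcne : c ≠ 0 := by
      intro hc0; rw [hc0] at hcd; simp at hcd; exact hdne hcd
    have hane : a ≠ 0 := by
      intro ha0; rw [ha0, hb0] at hdpos; simp at hdpos
    have hden : (0:ℝ) < |a| + |c| := by
      have := abs_pos.mpr hane; have := abs_nonneg c; linarith
    obtain ⟨x, hx0, hx1, hxK⟩ : ∃ x:ℝ, 0 ≤ x ∧ x < 1 ∧ |c| < (|a| + |c|)*x := by
      refine ⟨(|c|/(|a| + |c|) + 1)/2, by positivity, ?_, ?_⟩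
      · have h1 : |c|/(|a| + |c|) < 1 := by
          rw [div_lt_one hden]
          have := abs_pos.mpr hane; linarith
        linarith
      · have h1 : (|a| + |c|) * ((|c|/(|a| + |c|) + 1)/2) = (|c| + (|a| + |c|))/2 := by
          field_simp
        rw [h1]
        have := abs_pos.mpr hane; linarith
    have hxmem : x ∈ Set.Ico (0:ℝ) 1 := ⟨hx0, hx1⟩
    have hFx := hbij.mapsTo hxmem
    have hdenx : c*x + d = c*(x-1) := by
      have : d = -c := by linarith
      rw [this]; ring
    have hFxeq : F x = (a*x)/(c*(x-1)) := by
      rw [hFeq x hxmem, hb0, add_zero, hdenx]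
    have hcx1 : c*(x-1) ≠ 0 := mul_ne_zero hcne (by intro h; rw [sub_eq_zero] at h; exact (ne_of_lt hx1) h)
    have heq : a*x = F x * (c*(x-1)) := by rw [hFxeq, div_mul_cancel₀ _ hcx1]
    have habs : |a| * x ≤ |c| * (1-x) := by
      have h1 : |a*x| = |F x| * |c*(x-1)| := by rw [heq, abs_mul]
      have h2 : |F x| ≤ 1 := by
        rw [abs_of_nonneg hFx.1]; linarith [hFx.2]
      have h3 : |a*x| ≤ |c*(x-1)| := by
        rw [h1]
        calc |F x| * |c*(x-1)| ≤ 1 * |c*(x-1)| :=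
              mul_le_mul_of_nonneg_right h2 (abs_nonneg _)
          _ = |c*(x-1)| := one_mul _
      have h4 : |a*x| = |a| * x := by
        rw [abs_mul, abs_of_nonneg hx0]
      have h5 : |c*(x-1)| = |c| * (1-x) := by
        rw [abs_mul, abs_of_neg (by linarith : x - 1 < 0)]; ring
      rw [h4, h5] at h3; exact h3
    nlinarith [habs, hxK]
  · -- limit argument: F tends to (a+b)/(c+d) = 1 at 1
    have hnebot : (nhdsWithin (1:ℝ) (Set.Ico (0:ℝ) 1)).NeBot :=
      right_nhdsWithin_Ico_neBot one_pos
    have hlim1 : Filter.Tendsto F (nhdsWithin (1:ℝ) (Set.Ico (0:ℝ) 1))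
        (nhds ((a+b)/(c+d))) := by
      have hcont : Filter.Tendsto (fun x:ℝ => (a*x+b)/(c*x+d)) (nhds 1)
          (nhds ((a*1+b)/(c*1+d))) := by
        apply Filter.Tendsto.div
        · exact ((continuous_const.mul continuous_id).add continuous_const).tendsto 1
        · exact ((continuous_const.mul continuous_id).add continuous_const).tendsto 1
        · simpa using hcd
      have h2 := tendsto_nhdsWithin_of_tendsto_nhds (s := Set.Ico (0:ℝ) 1) hcont
      simp only [mul_one] at h2
      apply h2.congr'
      filter_upwards [self_mem_nhdsWithin] with x hx
      exact (hFeq x hx).symm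
    have hlim2 : Filter.Tendsto F (nhdsWithin (1:ℝ) (Set.Ico (0:ℝ) 1)) (nhds 1) := by
      rw [tendsto_order]
      constructor
      · intro a' ha'
        have hy : max a' 0 ∈ Set.Ico (0:ℝ) 1 := ⟨le_max_right _ _, max_lt ha' one_pos⟩
        obtain ⟨x', hx', hFx'⟩ := hbij.surjOn hy
        filter_upwards [nhdsWithin_le_nhds (Ioi_mem_nhds hx'.2), self_mem_nhdsWithin]
          with x hx1 hx2
        have := hmono x' hx' x hx2 hx1
        rw [hFx'] at this
        exact lt_of_le_of_lt (le_max_left a' 0) this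
      · intro a' ha'
        filter_upwards [self_mem_nhdsWithin] with x hx
        exact lt_trans (hbij.mapsTo hx).2 ha'
    have hL : (a+b)/(c+d) = 1 := tendsto_nhds_unique hlim1 hlim2
    have hab : a + b = c + d := by
      rwa [div_eq_one_iff_eq hcd] at hL
    have hc0 : c = 0 := by
      have : c*(x₀ - 1) = 0 := by rw [hb0] at hab; nlinarith [hfixeq]
      rcases mul_eq_zero.mp this with h'|h'
      · exact h'
      · exact absurd h' (sub_ne_zero_of_ne (ne_of_lt hx₀.2))
    have had : a = d := by rw [hc0] at hfixeq; linarith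
    exact hne fun x hx => by
      rw [hFeq x hx, hb0, hc0, had, add_zero, zero_mul, zero_add]
      field_simp
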